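/- arXiv:1802.04685 — 2 statements merged into one kernel-verified Lean document; each statement's English description precedes it below -/
import Mathlib

section
/- Let L be an algebraically closed field of characteristic zero and let K be a subfield of L. Suppose A, B, w ∈ K[x,y] satisfy: Jac(A,B) is a unit of K[x,y] and Jac(A,w) = 0. Then w lies in K[A], the K-subalgebra of K[x,y] generated by A. -/
open MvPolynomial

/-- The Jacobian of two polynomials `p, q ∈ R[x,y]`:
`Jac(p,q) = (∂p/∂x)(∂q/∂y) − (∂p/∂y)(∂q/∂x)`. -/
noncomputable def Jac {R : Type*} [CommRing R]
    (p q : MvPolynomial (Fin 2) R) : MvPolynomial (Fin 2) R :=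
  pderiv 0 p * pderiv 1 q - pderiv 1 p * pderiv 0 q

set_option linter.unusedSectionVars false

section Helpers
variable {σ : Type*} [DecidableEq σ]

lemma coeff_pderiv' {R : Type*} [CommSemiring R] (i : σ) (m : σ →₀ ℕ) (p : MvPolynomial σ R) :
    coeff m (pderiv i p) = ((m i : R) + 1) * coeff (m + Finsupp.single i 1) p := by
  induction p using MvPolynomial.induction_on' with
  | monomial s a =>
    rw [pderiv_monomial, coeff_monomial, coeff_monomial]
    by_cases hs : s = m + Finsupp.single i 1
    · subst hs
      have h1 : m + Finsupp.single i 1 - Finsupp.single i 1 = m :=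
        add_tsub_cancel_right (a := m) (b := Finsupp.single i 1)
      have h2 : (m + Finsupp.single i 1 : σ →₀ ℕ) i = m i + 1 := by
        simp [Finsupp.add_apply, Finsupp.single_eq_same]
      rw [if_pos h1, if_pos rfl, h2]
      push_cast
      ring
    · rw [if_neg hs, mul_zero]
      by_cases h2 : s - Finsupp.single i 1 = m
      · rw [if_pos h2]
        have hsi : s i = 0 := by
          by_contra h
          apply hs
          rw [← h2, tsub_add_cancel_of_le]
          exact Finsupp.single_le_iff.mpr (Nat.one_le_iff_ne_zero.mpr h)
        rw [hsi]
        simp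
      · rw [if_neg h2]
  | add p q hp hq =>
    simp [coeff_add, hp, hq, mul_add]

lemma pderiv_comm' {R : Type*} [CommSemiring R] (i j : σ) (p : MvPolynomial σ R) :
    pderiv i (pderiv j p) = pderiv j (pderiv i p) := by
  ext m
  simp only [coeff_pderiv']
  by_cases h : i = j
  · subst h; rfl
  · have h1 : (m + Finsupp.single i 1 : σ →₀ ℕ) j = m j := by
      simp [Finsupp.add_apply, Finsupp.single_apply, h]
    have h2 : (m + Finsupp.single j 1 : σ →₀ ℕ) i = m i := by
      simp [Finsupp.add_apply, Finsupp.single_apply, Ne.symm h]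
    rw [h1, h2, add_right_comm m (Finsupp.single i 1) (Finsupp.single j 1)]
    ring

end Helpers

section Helpers2
variable {σ : Type*} [DecidableEq σ]

lemma eq_C_of_pderiv_eq_zero' {R : Type*} [CommRing R] [NoZeroDivisors R] [CharZero R]
    {p : MvPolynomial (Fin 2) R}
    (h0 : pderiv 0 p = 0) (h1 : pderiv 1 p = 0) : p = C (coeff 0 p) := by
  ext m
  by_cases hm : m = 0
  · subst hm; simp
  · rw [coeff_C, if_neg (Ne.symm hm)]
    obtain ⟨i, hi⟩ : ∃ i, m i ≠ 0 := by
      by_contra h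
      push_neg at h
      exact hm (Finsupp.ext h)
    have hle : Finsupp.single i 1 ≤ m :=
      Finsupp.single_le_iff.mpr (Nat.one_le_iff_ne_zero.mpr hi)
    have hmm : (m - Finsupp.single i 1) + Finsupp.single i 1 = m := tsub_add_cancel_of_le hle
    have hpz : pderiv i p = 0 := by fin_cases i <;> assumption
    have hkey := coeff_pderiv' i (m - Finsupp.single i 1) p
    rw [hpz, coeff_zero, hmm] at hkey
    have hne : ((((m - Finsupp.single i 1 : Fin 2 →₀ ℕ) i : ℕ) : R) + 1) ≠ 0 := by
      have := Nat.cast_add_one_ne_zero (R := R) ((m - Finsupp.single i 1 : Fin 2 →₀ ℕ) i)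
      push_cast at this
      exact this
    rcases mul_eq_zero.mp hkey.symm with h | h
    · exact absurd h hne
    · exact h

lemma totalDegree_pderiv_lt' {R : Type*} [CommRing R] (i : σ) {p : MvPolynomial σ R}
    (h : pderiv i p ≠ 0) : (pderiv i p).totalDegree < p.totalDegree := by
  have key : ∀ m ∈ (pderiv i p).support, (m.sum fun _ e => e) + 1 ≤ p.totalDegree := by
    intro m hm
    rw [mem_support_iff, coeff_pderiv'] at hm
    have hc : coeff (m + Finsupp.single i 1) p ≠ 0 := fun h' => hm (by rw [h', mul_zero])
    have hle := le_totalDegree (mem_support_iff.mpr hc)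
    have hsum : ((m + Finsupp.single i 1 : σ →₀ ℕ).sum fun _ e => e)
        = (m.sum fun _ e => e) + 1 := by
      rw [Finsupp.sum_add_index' (fun _ => rfl) (fun _ _ _ => rfl),
        Finsupp.sum_single_index rfl]
    omega
  obtain ⟨m0, hm0⟩ := Finset.nonempty_iff_ne_empty.mpr
    (fun he => h (support_eq_empty.mp he))
  have hpos : 0 < p.totalDegree := lt_of_lt_of_le (Nat.succ_pos _) (key m0 hm0)
  rw [totalDegree, Finset.sup_lt_iff hpos]
  intro m hm
  have := key m hm
  omega

lemma top_component_ne_zero' {R : Type*} [CommSemiring R] {p : MvPolynomial σ R} (hp : p ≠ 0) :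
    homogeneousComponent p.totalDegree p ≠ 0 := by
  obtain ⟨m, hm, hsup⟩ := Finset.exists_mem_eq_sup p.support
    (support_nonempty.mpr hp) (fun s => s.sum fun _ e => e)
  intro h0
  have hc := coeff_homogeneousComponent (σ := σ) p.totalDegree p m
  have hdeg : m.degree = p.totalDegree := by
    rw [totalDegree, hsup]; rfl
  rw [h0, coeff_zero, if_pos hdeg] at hc
  exact (mem_support_iff.mp hm) hc.symm

lemma strip_top' {R : Type*} [CommRing R] (p : MvPolynomial σ R) :
    p - homogeneousComponent p.totalDegree p = 0 ∨
      (p - homogeneousComponent p.totalDegree p).totalDegree < p.totalDegree := by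
  set a := p.totalDegree with ha
  set r := p - homogeneousComponent a p with hr
  by_cases h : r = 0
  · exact Or.inl h
  · right
    have key : ∀ m ∈ r.support, (m.sum fun _ e => e) < a := by
      intro m hm
      rw [mem_support_iff, hr] at hm
      have hco : coeff m r = coeff m p - (if m.degree = a then coeff m p else 0) := by
        rw [hr, coeff_sub, coeff_homogeneousComponent]
      by_cases hd : m.degree = a
      · exfalso; apply hm; rw [coeff_sub, coeff_homogeneousComponent, if_pos hd, sub_self]
      · have hcm : coeff m p ≠ 0 := by
          intro hz
          apply hm
          rw [coeff_sub, coeff_homogeneousComponent, hz, if_neg hd, sub_zero]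
        have := le_totalDegree (mem_support_iff.mpr hcm)
        have hdm : m.degree = (m.sum fun _ e => e) := rfl
        omega
    obtain ⟨m0, hm0⟩ := support_nonempty.mpr h
    have hpos : 0 < a := lt_of_le_of_lt (Nat.zero_le _) (key m0 hm0)
    rw [totalDegree, Finset.sup_lt_iff hpos]
    exact key

lemma totalDegree_add_le_mul' {R : Type*} [CommRing R] [IsDomain R]
    {p q : MvPolynomial σ R} (hp : p ≠ 0) (hq : q ≠ 0) :
    p.totalDegree + q.totalDegree ≤ (p * q).totalDegree := by
  by_contra hcon
  push_neg at hcon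
  have hP0 : homogeneousComponent p.totalDegree p ≠ 0 := top_component_ne_zero' hp
  have hQ0 : homogeneousComponent q.totalDegree q ≠ 0 := top_component_ne_zero' hq
  have hPa := homogeneousComponent_isHomogeneous p.totalDegree p
  have hQb := homogeneousComponent_isHomogeneous q.totalDegree q
  have hsplit : p * q = homogeneousComponent p.totalDegree p * homogeneousComponent q.totalDegree q
      + (homogeneousComponent p.totalDegree p * (q - homogeneousComponent q.totalDegree q)
        + (p - homogeneousComponent p.totalDegree p) * q) := by ring
  have hPQ : homogeneousComponent (p.totalDegree + q.totalDegree)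
      (homogeneousComponent p.totalDegree p * homogeneousComponent q.totalDegree q)
      = homogeneousComponent p.totalDegree p * homogeneousComponent q.totalDegree q := by
    have hmem : homogeneousComponent p.totalDegree p * homogeneousComponent q.totalDegree q
        ∈ homogeneousSubmodule σ R (p.totalDegree + q.totalDegree) :=
      (mem_homogeneousSubmodule _ _).mpr (hPa.mul hQb)
    rw [homogeneousComponent_of_mem hmem, if_pos rfl]
  have h1 : homogeneousComponent (p.totalDegree + q.totalDegree)
      (homogeneousComponent p.totalDegree p * (q - homogeneousComponent q.totalDegree q)) = 0 := by
    rcases strip_top' q with h | h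
    · rw [h, mul_zero, map_zero]
    · apply homogeneousComponent_eq_zero
      have h2 := totalDegree_mul (homogeneousComponent p.totalDegree p)
        (q - homogeneousComponent q.totalDegree q)
      have h3 := hPa.totalDegree_le
      omega
  have h2 : homogeneousComponent (p.totalDegree + q.totalDegree)
      ((p - homogeneousComponent p.totalDegree p) * q) = 0 := by
    rcases strip_top' p with h | h
    · rw [h, zero_mul, map_zero]
    · apply homogeneousComponent_eq_zero
      have h4 := totalDegree_mul (p - homogeneousComponent p.totalDegree p) q
      omega
  have hzero : homogeneousComponent (p.totalDegree + q.totalDegree) (p * q) = 0 :=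
    homogeneousComponent_eq_zero _ _ hcon
  rw [hsplit, map_add, map_add, hPQ, h1, h2, add_zero, add_zero] at hzero
  exact mul_ne_zero hP0 hQ0 hzero

end Helpers2

lemma exists_antideriv' {F : Type*} [Field F] [CharZero F] (P : Polynomial F) :
    ∃ Q : Polynomial F, Polynomial.derivative Q = P := by
  induction P using Polynomial.induction_on' with
  | monomial n a =>
    refine ⟨Polynomial.monomial (n + 1) (a / (n + 1)), ?_⟩
    rw [Polynomial.derivative_monomial]
    simp only [Nat.add_sub_cancel, Nat.cast_add, Nat.cast_one]
    congr 1
    rw [div_mul_cancel₀]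
    exact_mod_cast Nat.cast_add_one_ne_zero (R := F) n
  | add p q hp hq =>
    obtain ⟨Qp, hQp⟩ := hp
    obtain ⟨Qq, hQq⟩ := hq
    exact ⟨Qp + Qq, by rw [map_add, hQp, hQq]⟩


set_option synthInstance.maxHeartbeats 1000000 in
set_option maxHeartbeats 1000000 in
/-- **CMW's theorem over any subfield `K` of an algebraically closed field `L` of
characteristic zero.** If `A, B, w ∈ K[x,y]` satisfy that `Jac(A,B)` is a unit of
`K[x,y]` and `Jac(A,w) = 0`, then `w ∈ K[A]`. -/
theorem cmw_over_subfield {L : Type*} [Field L] [IsAlgClosed L] [CharZero L]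
    (K : Subfield L)
    (A B w : MvPolynomial (Fin 2) ↥K)
    (hAB : IsUnit (Jac A B)) (hAw : Jac A w = 0) :
    w ∈ Algebra.adjoin ↥K {A} := by
  haveI : CharZero ↥K := inferInstance
  suffices H : ∀ n : ℕ, ∀ w : MvPolynomial (Fin 2) ↥K, Jac A w = 0 →
      w.totalDegree ≤ n → w ∈ Algebra.adjoin ↥K {A} from
    H w.totalDegree w hAw le_rfl
  intro n
  induction n with
  | zero =>
    intro w hw hdeg
    have h0 : w.totalDegree = 0 := Nat.le_zero.mp hdeg
    have hC : w = C (coeff 0 w) := by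
      ext m
      by_cases hm : m = 0
      · subst hm; simp
      · rw [coeff_C, if_neg (Ne.symm hm)]
        have hns : m ∉ w.support :=
          fun hms => hm (Finsupp.ext ((totalDegree_eq_zero_iff _ w).mp h0 m hms))
        exact_mod_cast notMem_support_iff.mp hns
    rw [hC, ← MvPolynomial.algebraMap_eq]
    exact Subalgebra.algebraMap_mem _ _
  | succ n IH =>
    intro w hw hdeg
    by_cases hcon : pderiv 0 w = 0 ∧ pderiv 1 w = 0
    · rw [eq_C_of_pderiv_eq_zero' hcon.1 hcon.2, ← MvPolynomial.algebraMap_eq]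
      exact Subalgebra.algebraMap_mem _ _
    · have hv1 : (↑hAB.unit⁻¹ : MvPolynomial (Fin 2) ↥K) * Jac A B = 1 := by
        have h := hAB.unit.inv_mul
        rw [hAB.unit_spec] at h
        exact h
      set v : MvPolynomial (Fin 2) ↥K := ↑hAB.unit⁻¹ with hvdef
      set f : MvPolynomial (Fin 2) ↥K :=
        v * (pderiv 0 w * pderiv 1 B - pderiv 1 w * pderiv 0 B) with hfdef
      have hJ : pderiv 0 A * pderiv 1 w - pderiv 1 A * pderiv 0 w = 0 := hw
      have hABu : v * (pderiv 0 A * pderiv 1 B - pderiv 1 A * pderiv 0 B) = 1 := hv1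
      have h0 : f * pderiv 0 A = pderiv 0 w := by
        rw [hfdef]
        linear_combination (pderiv 0 w) * hABu - v * (pderiv 0 B) * hJ
      have h1 : f * pderiv 1 A = pderiv 1 w := by
        rw [hfdef]
        linear_combination (pderiv 1 w) * hABu - v * (pderiv 1 B) * hJ
      have hJf : Jac A f = 0 := by
        have e0 := congrArg (pderiv 1) h0
        have e1 := congrArg (pderiv 0) h1
        rw [pderiv_mul] at e0 e1
        have hcA := pderiv_comm' (0 : Fin 2) 1 A
        have hcw := pderiv_comm' (0 : Fin 2) 1 w
        show pderiv 0 A * pderiv 1 f - pderiv 1 A * pderiv 0 f = 0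
        linear_combination e0 - e1 + f * hcA - hcw
      by_cases hf0 : f = 0
      · exfalso
        apply hcon
        constructor
        · rw [← h0, hf0, zero_mul]
        · rw [← h1, hf0, zero_mul]
      · have hdf : f.totalDegree < w.totalDegree := by
          rcases not_and_or.mp hcon with h | h
        -- case pderiv 0 w ≠ 0
          · have hA0 : pderiv 0 A ≠ 0 := fun hz => h (by rw [← h0, hz, mul_zero])
            have hle := totalDegree_add_le_mul' hf0 hA0
            have hlt := totalDegree_pderiv_lt' (0 : Fin 2) (p := w) h
            rw [h0] at hle
            omega
          · have hA1 : pderiv 1 A ≠ 0 := fun hz => h (by rw [← h1, hz, mul_zero])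
            have hle := totalDegree_add_le_mul' hf0 hA1
            have hlt := totalDegree_pderiv_lt' (1 : Fin 2) (p := w) h
            rw [h1] at hle
            omega
        have hfmem : f ∈ Algebra.adjoin ↥K {A} := IH f hJf (by omega)
        rw [Algebra.adjoin_singleton_eq_range_aeval] at hfmem
        obtain ⟨P, hP⟩ := hfmem
        have hP' : Polynomial.aeval A P = f := hP
        obtain ⟨Q, hQ⟩ := exists_antideriv' (F := ↥K) P
        have hg : ∀ i : Fin 2, pderiv i (Polynomial.aeval A Q) = f * pderiv i A := by
          intro i
          rw [(pderiv i).map_aeval Q A, hQ, smul_eq_mul, hP']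
        have hw0 : pderiv 0 (w - Polynomial.aeval A Q) = 0 := by
          rw [map_sub, hg 0, h0, sub_self]
        have hw1 : pderiv 1 (w - Polynomial.aeval A Q) = 0 := by
          rw [map_sub, hg 1, h1, sub_self]
        have hconst := eq_C_of_pderiv_eq_zero' hw0 hw1
        have hwx : w = Polynomial.aeval A Q + C (coeff 0 (w - Polynomial.aeval A Q)) := by
          rw [← hconst]; ring
        rw [hwx]
        apply Subalgebra.add_mem
        · rw [Algebra.adjoin_singleton_eq_range_aeval]
          exact ⟨Q, rfl⟩
        · rw [← MvPolynomial.algebraMap_eq]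
          exact Subalgebra.algebraMap_mem _ _
end

section
/- Let D be an integral domain of characteristic zero, and let A, B, w ∈ D[x,y]. Suppose Jac(A,B) is a unit of D[x,y] and Jac(A,w) = 0. Then there exists a nonzero element d ∈ D such that d·w lies in D[A], the D-subalgebra of D[x,y] generated by A. -/
open MvPolynomial

namespace CMWAux

variable {σ : Type*}

lemma degree_add (a b : σ →₀ ℕ) : (a + b).degree = a.degree + b.degree := by
  simp [Finsupp.degree_eq_weight_one, map_add]

lemma degree_single (i : σ) : (Finsupp.single i 1).degree = 1 := by
  classical
  simp [Finsupp.degree_apply, Finsupp.support_single_ne_zero i one_ne_zero]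

lemma degree_eq_sum (d : σ →₀ ℕ) : (d.sum fun _ e => e) = d.degree := rfl

section CommSemiring
variable {R : Type*} [CommSemiring R]

lemma coeff_pderiv (f : MvPolynomial σ R) (i : σ) (d : σ →₀ ℕ) :
    coeff d (pderiv i f) = ((d i + 1 : ℕ) : R) * coeff (d + Finsupp.single i 1) f := by
  classical
  induction f using MvPolynomial.induction_on' with
  | add p q hp hq => simp [map_add, coeff_add, mul_add, hp, hq]
  | monomial s a =>
    rw [pderiv_monomial, coeff_monomial, coeff_monomial]
    by_cases hs : s = d + Finsupp.single i 1
    · subst hs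
      have h1 : d + Finsupp.single i 1 - Finsupp.single i 1 = d :=
        add_tsub_cancel_right (α := σ →₀ ℕ) ..
      rw [if_pos h1, if_pos rfl]
      have h5 : ((d + Finsupp.single i 1 : σ →₀ ℕ)) i = d i + 1 := by
        rw [Finsupp.add_apply, Finsupp.single_eq_same]
      rw [h5]
      push_cast
      ring
    · rw [if_neg hs, mul_zero]
      by_cases h2 : s - Finsupp.single i 1 = d
      · rw [if_pos h2]
        have h3 : s i = 0 := by
          by_contra h3
          apply hs
          have h4 : Finsupp.single i 1 ≤ s :=
            Finsupp.single_le_iff.mpr (Nat.one_le_iff_ne_zero.mpr h3)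
          rw [← h2, tsub_add_cancel_of_le h4]
        simp [h3]
      · rw [if_neg h2]

lemma pderiv_comm' (i j : σ) (f : MvPolynomial σ R) :
    pderiv i (pderiv j f) = pderiv j (pderiv i f) := by
  classical
  by_cases h : i = j
  · subst h; rfl
  · ext d
    rw [coeff_pderiv, coeff_pderiv, coeff_pderiv, coeff_pderiv]
    have h1 : ((d + Finsupp.single i 1 : σ →₀ ℕ)) j = d j := by
      rw [Finsupp.add_apply, Finsupp.single_apply, if_neg h, add_zero]
    have h2 : ((d + Finsupp.single j 1 : σ →₀ ℕ)) i = d i := by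
      rw [Finsupp.add_apply, Finsupp.single_apply, if_neg (Ne.symm h), add_zero]
    rw [h1, h2, add_right_comm d (Finsupp.single i 1) (Finsupp.single j 1)]
    ring

lemma degree_lt_of_mem_support_pderiv {f : MvPolynomial σ R} {i : σ} {d : σ →₀ ℕ}
    (hd : d ∈ (pderiv i f).support) : d.degree + 1 ≤ f.totalDegree := by
  rw [mem_support_iff, coeff_pderiv] at hd
  have h1 : coeff (d + Finsupp.single i 1) f ≠ 0 := by
    intro h; rw [h, mul_zero] at hd; exact hd rfl
  have h2 := le_totalDegree (p := f) (mem_support_iff.mpr h1)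
  rw [degree_eq_sum, degree_add, degree_single] at h2
  exact h2

lemma totalDegree_pderiv_lt {f : MvPolynomial σ R} {i : σ} (h : pderiv i f ≠ 0) :
    (pderiv i f).totalDegree + 1 ≤ f.totalDegree := by
  obtain ⟨d, hd, hsup⟩ := Finset.exists_mem_eq_sup _ (support_nonempty.mpr h)
    (fun s : σ →₀ ℕ => s.sum fun _ e => e)
  have : (pderiv i f).totalDegree = d.degree := hsup
  rw [this]
  exact degree_lt_of_mem_support_pderiv hd

end CommSemiring

section Domain
variable {K : Type*} [CommRing K] [IsDomain K]

lemma homogeneousComponent_totalDegree_ne_zero {p : MvPolynomial σ K} (hp : p ≠ 0) :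
    homogeneousComponent p.totalDegree p ≠ 0 := by
  obtain ⟨d, hd, hsup⟩ := Finset.exists_mem_eq_sup _ (support_nonempty.mpr hp)
    (fun s : σ →₀ ℕ => s.sum fun _ e => e)
  have hdeg : d.degree = p.totalDegree := (degree_eq_sum d).symm.trans hsup.symm
  intro h
  have := coeff_homogeneousComponent (n := p.totalDegree) (φ := p) d
  rw [h, if_pos hdeg] at this
  exact mem_support_iff.mp hd this.symm

lemma totalDegree_mul_eq {p q : MvPolynomial σ K} (hp : p ≠ 0) (hq : q ≠ 0) :
    (p * q).totalDegree = p.totalDegree + q.totalDegree := by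
  classical
  refine le_antisymm (totalDegree_mul p q) ?_
  set m := p.totalDegree
  set n := q.totalDegree
  set hpc := homogeneousComponent m p with hpc_def
  set hqc := homogeneousComponent n q with hqc_def
  have hpc0 : hpc ≠ 0 := homogeneousComponent_totalDegree_ne_zero hp
  have hqc0 : hqc ≠ 0 := homogeneousComponent_totalDegree_ne_zero hq
  have hmul : hpc * hqc ≠ 0 := mul_ne_zero hpc0 hqc0
  have hhom : (hpc * hqc).IsHomogeneous (m + n) :=
    (homogeneousComponent_isHomogeneous m p).mul (homogeneousComponent_isHomogeneous n q)
  obtain ⟨d, hd⟩ := support_nonempty.mpr hmul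
  have hdeg : d.degree = m + n := by
    by_contra hne
    exact mem_support_iff.mp hd (hhom.coeff_eq_zero hne)
  have hkey : coeff d (p * q) = coeff d (hpc * hqc) := by
    rw [coeff_mul, coeff_mul]
    refine Finset.sum_congr rfl fun x hx => ?_
    rw [Finset.HasAntidiagonal.mem_antidiagonal] at hx
    have hsum : x.1.degree + x.2.degree = m + n := by
      rw [← degree_add, hx, hdeg]
    rw [hpc_def, hqc_def, coeff_homogeneousComponent, coeff_homogeneousComponent]
    by_cases h1 : x.1.degree = m
    · have h2 : x.2.degree = n := by omega
      rw [if_pos h1, if_pos h2]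
    · rw [if_neg h1]
      by_cases h1' : x.1.degree ≤ m
      · have h2 : ¬ x.2.degree ≤ n := by omega
        have : coeff x.2 q = 0 := by
          apply coeff_eq_zero_of_totalDegree_lt
          have : ∑ i ∈ x.2.support, x.2 i = x.2.degree := rfl
          omega
        rw [this, mul_zero, zero_mul]
      · have : coeff x.1 p = 0 := by
          apply coeff_eq_zero_of_totalDegree_lt
          have : ∑ i ∈ x.1.support, x.1 i = x.1.degree := rfl
          omega
        rw [this, zero_mul, zero_mul]
  have : d ∈ (p * q).support := by
    rw [mem_support_iff, hkey]
    exact mem_support_iff.mp hd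
  have := le_totalDegree this
  rw [degree_eq_sum, hdeg] at this
  exact this

end Domain

section Field
variable {K : Type*} [Field K] [CharZero K]

lemma exists_good_pderiv (f : MvPolynomial σ K) (hf : f.totalDegree ≠ 0) :
    ∃ i : σ, pderiv i f ≠ 0 ∧ (pderiv i f).totalDegree + 1 = f.totalDegree := by
  have hf0 : f ≠ 0 := by rintro rfl; simp at hf
  obtain ⟨d, hd, hsup⟩ := Finset.exists_mem_eq_sup _ (support_nonempty.mpr hf0)
    (fun s : σ →₀ ℕ => s.sum fun _ e => e)
  have hdeg : d.degree = f.totalDegree := (degree_eq_sum d).symm.trans hsup.symm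
  have hd0 : d ≠ 0 := by
    intro h; rw [h] at hdeg; simp [map_zero] at hdeg; exact hf hdeg.symm
  obtain ⟨i, hi⟩ : ∃ i, d i ≠ 0 := by
    by_contra h
    push_neg at h
    exact hd0 (Finsupp.ext h)
  have hle : Finsupp.single i 1 ≤ d := Finsupp.single_le_iff.mpr (Nat.one_le_iff_ne_zero.mpr hi)
  have hcan : d - Finsupp.single i 1 + Finsupp.single i 1 = d := tsub_add_cancel_of_le hle
  have hco : coeff (d - Finsupp.single i 1) (pderiv i f) ≠ 0 := by
    rw [coeff_pderiv, hcan]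
    apply mul_ne_zero
    · exact Nat.cast_ne_zero.mpr (Nat.succ_ne_zero _)
    · exact mem_support_iff.mp hd
  have hne : pderiv i f ≠ 0 := fun h => hco (by rw [h]; simp)
  refine ⟨i, hne, ?_⟩
  have hub := totalDegree_pderiv_lt hne
  have hlb : (d - Finsupp.single i 1).degree ≤ (pderiv i f).totalDegree :=
    (degree_eq_sum _) ▸ le_totalDegree (mem_support_iff.mpr hco)
  have hdd : (d - Finsupp.single i 1).degree + 1 = d.degree := by
    conv_rhs => rw [← hcan]
    rw [degree_add, degree_single]
  omega

lemma eq_C_of_pderiv_eq_zero {w : MvPolynomial σ K}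
    (h : ∀ i : σ, pderiv i w = 0) : w = C (coeff 0 w) := by
  classical
  ext d
  rw [coeff_C]
  by_cases hd : d = 0
  · subst hd; rw [if_pos rfl]
  · rw [if_neg (Ne.symm hd)]
    obtain ⟨i, hi⟩ : ∃ i, d i ≠ 0 := by
      by_contra hc; push_neg at hc; exact hd (Finsupp.ext hc)
    have hle : Finsupp.single i 1 ≤ d := Finsupp.single_le_iff.mpr (Nat.one_le_iff_ne_zero.mpr hi)
    have hcan : d - Finsupp.single i 1 + Finsupp.single i 1 = d := tsub_add_cancel_of_le hle
    have := coeff_pderiv w i (d - Finsupp.single i 1)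
    rw [h i, hcan] at this
    have hnz : ((((d - Finsupp.single i 1 : σ →₀ ℕ)) i + 1 : ℕ) : K) ≠ 0 :=
      Nat.cast_ne_zero.mpr (Nat.succ_ne_zero _)
    have h0 : (0 : K) = ((((d - Finsupp.single i 1 : σ →₀ ℕ)) i + 1 : ℕ) : K) * coeff d w := by
      simpa using this
    rcases mul_eq_zero.mp h0.symm with h | h
    · exact absurd h hnz
    · exact h

end Field



section Chain
variable {R : Type*} [CommRing R]

lemma pderiv_poly_aeval (A : MvPolynomial (Fin 2) R) (Q : Polynomial R) (i : Fin 2) :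
    pderiv i (Polynomial.aeval A Q) = Polynomial.aeval A Q.derivative * pderiv i A := by
  induction Q using Polynomial.induction_on' with
  | add p q hp hq => simp [map_add, hp, hq, add_mul]
  | monomial n a =>
    rw [Polynomial.aeval_monomial, Polynomial.derivative_monomial, Polynomial.aeval_monomial,
      MvPolynomial.algebraMap_eq, pderiv_C_mul, pderiv_pow, map_mul,
      MvPolynomial.C_eq_coe_nat]
    ring

end Chain

section Key
variable {K : Type*} [Field K] [CharZero K]

lemma exists_antideriv (P : Polynomial K) : ∃ Q : Polynomial K, Q.derivative = P := by
  induction P using Polynomial.induction_on' with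
  | add p q hp hq =>
    obtain ⟨Qp, hQp⟩ := hp
    obtain ⟨Qq, hQq⟩ := hq
    exact ⟨Qp + Qq, by rw [Polynomial.derivative_add, hQp, hQq]⟩
  | monomial n a =>
    refine ⟨Polynomial.monomial (n + 1) (a / (n + 1)), ?_⟩
    rw [Polynomial.derivative_monomial]
    have hne : ((n : K) + 1) ≠ 0 := by exact_mod_cast Nat.succ_ne_zero n
    simp only [Nat.add_sub_cancel]
    congr 1
    push_cast
    field_simp

lemma key_induction (A : MvPolynomial (Fin 2) K)
    (hrel : IsRelPrime (pderiv 0 A) (pderiv 1 A))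
    (hA0 : pderiv 0 A ≠ 0 ∨ pderiv 1 A ≠ 0) :
    ∀ n : ℕ, ∀ w : MvPolynomial (Fin 2) K, w.totalDegree ≤ n →
      pderiv 0 A * pderiv 1 w = pderiv 1 A * pderiv 0 w →
      ∃ P : Polynomial K, Polynomial.aeval A P = w := by
  -- `A` is nonconstant
  have hdegA : A.totalDegree ≠ 0 := by
    intro h0
    have hz : ∀ i : Fin 2, pderiv i A = 0 := by
      intro i
      by_contra hne
      obtain ⟨d, hd⟩ := support_nonempty.mpr hne
      have := degree_lt_of_mem_support_pderiv hd
      omega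
    rcases hA0 with h | h <;> exact h (hz _)
  intro n
  induction n with
  | zero =>
    intro w hw _
    have hwz : ∀ i : Fin 2, pderiv i w = 0 := by
      intro i
      by_contra hne
      obtain ⟨d, hd⟩ := support_nonempty.mpr hne
      have := degree_lt_of_mem_support_pderiv hd
      omega
    refine ⟨Polynomial.C (coeff 0 w), ?_⟩
    rw [Polynomial.aeval_C, MvPolynomial.algebraMap_eq]
    exact (eq_C_of_pderiv_eq_zero hwz).symm
  | succ n ih =>
    intro w hw hJ
    -- find `h` with `∂ᵢ w = h * ∂ᵢ A`
    obtain ⟨h, hw0, hw1⟩ : ∃ h, pderiv 0 w = h * pderiv 0 A ∧ pderiv 1 w = h * pderiv 1 A := by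
      rcases hA0 with hA | hA
      · have hdvd : pderiv 0 A ∣ pderiv 1 A * pderiv 0 w := ⟨pderiv 1 w, hJ.symm⟩
        obtain ⟨h, hh⟩ := hrel.dvd_of_dvd_mul_left hdvd
        refine ⟨h, by rw [hh]; ring, ?_⟩
        have : pderiv 0 A * pderiv 1 w = pderiv 0 A * (h * pderiv 1 A) := by
          rw [hJ, hh]; ring
        exact mul_left_cancel₀ hA this
      · have hdvd : pderiv 1 A ∣ pderiv 0 A * pderiv 1 w := ⟨pderiv 0 w, hJ⟩
        obtain ⟨h, hh⟩ := hrel.symm.dvd_of_dvd_mul_left hdvd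
        refine ⟨h, ?_, by rw [hh]; ring⟩
        have : pderiv 1 A * pderiv 0 w = pderiv 1 A * (h * pderiv 0 A) := by
          rw [← hJ, hh]; ring
        exact mul_left_cancel₀ hA this
    by_cases hzero : h = 0
    · subst hzero
      rw [zero_mul] at hw0 hw1
      have hwz : ∀ i : Fin 2, pderiv i w = 0 := by
        intro i; fin_cases i <;> assumption
      refine ⟨Polynomial.C (coeff 0 w), ?_⟩
      rw [Polynomial.aeval_C, MvPolynomial.algebraMap_eq]
      exact (eq_C_of_pderiv_eq_zero hwz).symm
    -- `h` also satisfies the Jacobian equation with `A`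
    · have hJh : pderiv 0 A * pderiv 1 h = pderiv 1 A * pderiv 0 h := by
        have hc : pderiv 1 (pderiv 0 w) = pderiv 0 (pderiv 1 w) := pderiv_comm' 1 0 w
        rw [hw0, hw1, pderiv_mul, pderiv_mul] at hc
        have hAc : pderiv 1 (pderiv 0 A) = pderiv 0 (pderiv 1 A) := pderiv_comm' 1 0 A
        rw [hAc] at hc
        have := add_right_cancel hc
        linear_combination this
      -- degree bound
      obtain ⟨i, hAi, hAideg⟩ := exists_good_pderiv A hdegA
      have hwi : pderiv i w = h * pderiv i A := by fin_cases i <;> assumption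
      have hwine : pderiv i w ≠ 0 := by
        rw [hwi]; exact mul_ne_zero hzero hAi
      have hdmul : (pderiv i w).totalDegree = h.totalDegree + (pderiv i A).totalDegree := by
        rw [hwi]; exact totalDegree_mul_eq hzero hAi
      have hdw := totalDegree_pderiv_lt hwine
      have hdh : h.totalDegree ≤ n := by omega
      obtain ⟨P, hP⟩ := ih h hdh hJh
      obtain ⟨Q, hQ⟩ := exists_antideriv P
      have hgrad : ∀ j : Fin 2, pderiv j (w - Polynomial.aeval A Q) = 0 := by
        intro j
        rw [map_sub, pderiv_poly_aeval, hQ, hP]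
        have : pderiv j w = h * pderiv j A := by fin_cases j <;> assumption
        rw [this]
        ring
      refine ⟨Q + Polynomial.C (coeff 0 (w - Polynomial.aeval A Q)), ?_⟩
      rw [map_add, Polynomial.aeval_C, MvPolynomial.algebraMap_eq,
        ← eq_C_of_pderiv_eq_zero hgrad]
      ring

end Key

end CMWAux


/-- Over an integral domain `D` of characteristic zero: if `Jac(A,B)` is a unit of
`D[x,y]` and `Jac(A,w) = 0`, then there is a nonzero `d ∈ D` with `d·w ∈ D[A]`. -/
theorem cmw_over_domain_denominator {D : Type*} [CommRing D] [IsDomain D] [CharZero D]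
    (A B w : MvPolynomial (Fin 2) D)
    (hAB : IsUnit (Jac A B)) (hAw : Jac A w = 0) :
    ∃ d : D, d ≠ 0 ∧ (C d) * w ∈ Algebra.adjoin D {A} := by
  classical
  set K := FractionRing D
  set φ : MvPolynomial (Fin 2) D →+* MvPolynomial (Fin 2) K :=
    MvPolynomial.map (algebraMap D K) with hφ
  have hinj : Function.Injective φ :=
    MvPolynomial.map_injective _ (IsFractionRing.injective D K)
  have hmapJac : ∀ p q : MvPolynomial (Fin 2) D, φ (Jac p q) = Jac (φ p) (φ q) := by
    intro p q
    simp only [Jac, map_sub, map_mul, hφ, pderiv_map]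
  have hABK : IsUnit (Jac (φ A) (φ B)) := by rw [← hmapJac]; exact hAB.map φ
  have hrel : IsRelPrime (pderiv 0 (φ A)) (pderiv 1 (φ A)) := by
    intro g hg0 hg1
    have hdvd : g ∣ Jac (φ A) (φ B) :=
      dvd_sub (hg0.mul_right _) (hg1.mul_right _)
    exact isUnit_of_dvd_unit hdvd hABK
  have hA0 : pderiv 0 (φ A) ≠ 0 ∨ pderiv 1 (φ A) ≠ 0 := by
    by_contra hc
    push_neg at hc
    have hz : Jac (φ A) (φ B) = 0 := by rw [Jac, hc.1, hc.2]; ring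
    rw [hz] at hABK
    exact not_isUnit_zero hABK
  have hJw : pderiv 0 (φ A) * pderiv 1 (φ w) = pderiv 1 (φ A) * pderiv 0 (φ w) := by
    have h0 : Jac (φ A) (φ w) = 0 := by rw [← hmapJac, hAw, map_zero]
    rwa [Jac, sub_eq_zero] at h0
  obtain ⟨P, hP⟩ :=
    CMWAux.key_induction (φ A) hrel hA0 (φ w).totalDegree (φ w) le_rfl hJw
  obtain ⟨b, hb⟩ := IsLocalization.integerNormalization_map_to_map (nonZeroDivisors D) P
  refine ⟨(b : D), nonZeroDivisors.ne_zero b.2, ?_⟩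
  rw [Algebra.adjoin_singleton_eq_range_aeval]
  refine ⟨IsLocalization.integerNormalization (nonZeroDivisors D) P, ?_⟩
  apply hinj
  set P₀ := IsLocalization.integerNormalization (nonZeroDivisors D) P with hP₀
  have step1 : φ (Polynomial.aeval A P₀) = Polynomial.eval₂ (φ.comp C) (φ A) P₀ := by
    rw [Polynomial.aeval_def, MvPolynomial.algebraMap_eq, Polynomial.hom_eval₂]
  have step2 : (φ.comp (C : D →+* MvPolynomial (Fin 2) D)) =
      (C : K →+* MvPolynomial (Fin 2) K).comp (algebraMap D K) := by
    ext a
    simp [hφ]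
  have step3 : Polynomial.eval₂ ((C : K →+* MvPolynomial (Fin 2) K).comp (algebraMap D K))
      (φ A) P₀ = Polynomial.eval₂ C (φ A) (P₀.map (algebraMap D K)) := by
    rw [Polynomial.eval₂_map]
  have step4 : P₀.map (algebraMap D K) = Polynomial.C (algebraMap D K b) * P := by
    rw [hb, ← algebraMap_smul K (b : D) P, Polynomial.smul_eq_C_mul]
  show φ (Polynomial.aeval A P₀) = φ (C (b : D) * w)
  rw [step1, step2, step3, step4, Polynomial.eval₂_mul, Polynomial.eval₂_C,
    ← MvPolynomial.algebraMap_eq, ← Polynomial.aeval_def, hP]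
  rw [map_mul]
  congr 1
  simp [hφ]
end
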